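/- Let r ∈ (0,1) and 0 ≤ a < b. Define G(y) := (y − 2)/(y² − y + 1) + (2/√3)·arctan((2y − 1)/√3) for y ∈ ℝ. Then ∫_a^b (r^z/(r^z + (1−r^z)²))² dz = (1/(3·log r))·[G(r^b) − G(r^a)]. -/

import Mathlib

open Real MeasureTheory intervalIntegral

private lemma qpos' (y : ℝ) : 0 < y ^ 2 - y + 1 := by nlinarith [sq_nonneg (2 * y - 1)]

private lemma hasDerivAt_G' (y : ℝ) :
    HasDerivAt (fun y : ℝ => (y - 2) / (y ^ 2 - y + 1)
      + 2 / Real.sqrt 3 * Real.arctan ((2 * y - 1) / Real.sqrt 3))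
      (3 * y / (y ^ 2 - y + 1) ^ 2) y := by
  have h3 : (0:ℝ) < Real.sqrt 3 := Real.sqrt_pos.mpr (by norm_num)
  have hs : Real.sqrt 3 ^ 2 = 3 := Real.sq_sqrt (by norm_num)
  have hq := qpos' y
  have h1 : HasDerivAt (fun y : ℝ => (y - 2) / (y ^ 2 - y + 1))
      ((1 * (y ^ 2 - y + 1) - (y - 2) * (2 * y ^ 1 - 1)) / (y ^ 2 - y + 1) ^ 2) y :=
    ((hasDerivAt_id y).sub_const 2).div
      (((hasDerivAt_pow 2 y).sub (hasDerivAt_id y)).add_const 1) hq.ne'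
  have hinner : HasDerivAt (fun y : ℝ => (2 * y - 1) / Real.sqrt 3)
      (2 / Real.sqrt 3) y := by
    have := (((hasDerivAt_id y).const_mul 2).sub_const 1).div_const (Real.sqrt 3)
    simpa using this
  have h2 : HasDerivAt (fun y : ℝ => Real.arctan ((2 * y - 1) / Real.sqrt 3))
      (1 / (1 + ((2 * y - 1) / Real.sqrt 3) ^ 2) * (2 / Real.sqrt 3)) y :=
    by have := (Real.hasDerivAt_arctan ((2 * y - 1) / Real.sqrt 3)).comp y hinner; exact this
  have h := h1.add (h2.const_mul (2 / Real.sqrt 3))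
  refine h.congr_deriv ?_
  have hd : (0:ℝ) < 1 + ((2 * y - 1) / Real.sqrt 3) ^ 2 := by positivity
  have key2 : 2 / Real.sqrt 3 * (1 / (1 + ((2 * y - 1) / Real.sqrt 3) ^ 2)
      * (2 / Real.sqrt 3)) = 1 / (y ^ 2 - y + 1) := by
    field_simp
    rw [hs, eq_div_iff (by nlinarith)]; ring
  rw [key2]
  field_simp
  ring

theorem second_moment_uniform_uncertainty_integral
    (r a b : ℝ) (hr : r ∈ Set.Ioo (0:ℝ) 1) (ha : 0 ≤ a) (hab : a < b)
    (G : ℝ → ℝ)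
    (hG : ∀ y, G y = (y - 2) / (y ^ 2 - y + 1)
      + 2 / Real.sqrt 3 * Real.arctan ((2 * y - 1) / Real.sqrt 3)) :
    ∫ z in a..b, (r ^ z / (r ^ z + (1 - r ^ z) ^ 2)) ^ 2
      = 1 / (3 * Real.log r) * (G (r ^ b) - G (r ^ a)) := by
  obtain ⟨hr0, hr1⟩ := hr
  have hlog : Real.log r < 0 := Real.log_neg hr0 hr1
  have hlogne : Real.log r ≠ 0 := hlog.ne
  have hGeq : G = fun y : ℝ => (y - 2) / (y ^ 2 - y + 1)
      + 2 / Real.sqrt 3 * Real.arctan ((2 * y - 1) / Real.sqrt 3) := funext hG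
  have hrp : ∀ z : ℝ, HasDerivAt (fun z : ℝ => r ^ z) (r ^ z * Real.log r) z :=
    fun z => (Real.hasStrictDerivAt_const_rpow hr0 z).hasDerivAt
  have key : ∀ z ∈ Set.uIcc a b,
      HasDerivAt (fun z => 1 / (3 * Real.log r) * G (r ^ z))
        ((r ^ z / (r ^ z + (1 - r ^ z) ^ 2)) ^ 2) z := by
    intro z _
    have hrz : 0 < r ^ z := Real.rpow_pos_of_pos hr0 z
    have hq := qpos' (r ^ z)
    have hGd : HasDerivAt G (3 * r ^ z / ((r ^ z) ^ 2 - r ^ z + 1) ^ 2) (r ^ z) := by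
      rw [hGeq]; exact hasDerivAt_G' (r ^ z)
    have h := (hGd.comp z (hrp z)).const_mul (1 / (3 * Real.log r))
    refine h.congr_deriv ?_
    have hq2 : r ^ z + (1 - r ^ z) ^ 2 = (r ^ z) ^ 2 - r ^ z + 1 := by ring
    rw [hq2]
    field_simp
  have hcont : Continuous fun z : ℝ => (r ^ z / (r ^ z + (1 - r ^ z) ^ 2)) ^ 2 := by
    have hc : Continuous fun z : ℝ => r ^ z :=
      continuous_iff_continuousAt.mpr fun z => (hrp z).continuousAt
    have hne : ∀ z : ℝ, r ^ z + (1 - r ^ z) ^ 2 ≠ 0 := by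
      intro z
      have hq := qpos' (r ^ z)
      nlinarith
    exact (hc.div (hc.add ((continuous_const.sub hc).pow 2)) hne).pow 2
  rw [intervalIntegral.integral_eq_sub_of_hasDerivAt key
    (hcont.intervalIntegrable a b)]
  ring
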